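/- arXiv:2502.12603 — 3 statements merged into one kernel-verified Lean document; each statement's English description precedes it below -/
import Mathlib

section
/- Let p, q, m be natural numbers. Let ĝ : ℝ^p → ℝ^m be a differentiable map whose Fréchet derivative at every point is an injective linear map, and let h : ℝ^p × ℝ^q → ℝ^p be differentiable. If the composition ĝ ∘ h does not depend on its second argument, i.e. for all u ∈ ℝ^p and all v, v' ∈ ℝ^q one has ĝ(h(u,v)) = ĝ(h(u,v')), then h itself does not depend on its second argument: for all u ∈ ℝ^p and all v, v' ∈ ℝ^q, h(u,v) = h(u,v'). -/
/-- If `ĝ` is differentiable with everywhere injective Fréchet derivative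
and `h` is differentiable, and `ĝ ∘ h` does not depend on its second argument,
then `h` does not depend on its second argument. -/
theorem stmt0 (p q m : ℕ)
    (gHat : (Fin p → ℝ) → (Fin m → ℝ))
    (h : (Fin p → ℝ) × (Fin q → ℝ) → (Fin p → ℝ))
    (hgHat_diff : Differentiable ℝ gHat)
    (hgHat_inj : ∀ x : Fin p → ℝ, Function.Injective (fderiv ℝ gHat x))
    (hh_diff : Differentiable ℝ h)
    (hcomp : ∀ (u : Fin p → ℝ) (v v' : Fin q → ℝ), gHat (h (u, v)) = gHat (h (u, v'))) :
    ∀ (u : Fin p → ℝ) (v v' : Fin q → ℝ), h (u, v) = h (u, v') := by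
  intro u v v'
  set f : (Fin q → ℝ) → (Fin p → ℝ) := fun w => h (u, w) with hf
  have hf_diff : Differentiable ℝ f := by
    intro w
    exact DifferentiableAt.comp w (hh_diff (u, w)) (((differentiable_const u).prodMk differentiable_id) w)
  -- gHat ∘ f is constant
  have hconst : ∀ w, gHat (f w) = gHat (f v) := fun w => hcomp u w v
  have hgf_fderiv : ∀ w, fderiv ℝ (fun w => gHat (f w)) w = 0 := by
    intro w
    have : (fun w => gHat (f w)) = fun _ => gHat (f v) := funext hconst
    rw [this]
    exact fderiv_const_apply _
  have hfderiv0 : ∀ w, fderiv ℝ f w = 0 := by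
    intro w
    have hchain : fderiv ℝ (fun w => gHat (f w)) w
        = (fderiv ℝ gHat (f w)).comp (fderiv ℝ f w) :=
      fderiv_comp w (hgHat_diff (f w)) (hf_diff w)
    have hz : (fderiv ℝ gHat (f w)).comp (fderiv ℝ f w) = 0 := by
      rw [← hchain]; exact hgf_fderiv w
    refine ContinuousLinearMap.ext fun x => ?_
    apply hgHat_inj (f w)
    have := congrFun (congrArg (fun L : (Fin q → ℝ) →L[ℝ] (Fin m → ℝ) => (L : (Fin q → ℝ) → (Fin m → ℝ))) hz) x
    simpa using this
  have := is_const_of_fderiv_eq_zero hf_diff hfderiv0 v v'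
  simpa [hf] using this
end

section
/- Let n_s, n₁, n₂, m₁, m₂ be natural numbers. Let ĝ₁ : ℝ^{n_s} × ℝ^{n₁} → ℝ^{m₁} and ĝ₂ : ℝ^{n_s} × ℝ^{n₂} → ℝ^{m₂} be differentiable maps whose Fréchet derivatives are injective at every point. Let h : ℝ^{n_s} × ℝ^{n₁} × ℝ^{n₂} → ℝ^{n_s} × ℝ^{n₁} × ℝ^{n₂} be differentiable, with component functions h = (h_s, h₁, h₂) taking values in ℝ^{n_s}, ℝ^{n₁}, ℝ^{n₂} respectively. Suppose there exist functions g₁ : ℝ^{n_s} × ℝ^{n₁} → ℝ^{m₁} and g₂ : ℝ^{n_s} × ℝ^{n₂} → ℝ^{m₂} such that for all (u, v, w) ∈ ℝ^{n_s} × ℝ^{n₁} × ℝ^{n₂}: ĝ₁(h_s(u,v,w), h₁(u,v,w)) = g₁(u,v) and ĝ₂(h_s(u,v,w), h₂(u,v,w)) = g₂(u,w). Then h_s depends only on its first argument: for all u ∈ ℝ^{n_s} and all v, v' ∈ ℝ^{n₁}, w, w' ∈ ℝ^{n₂}, h_s(u,v,w) = h_s(u,v',w'). -/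
/-- If `g ∘ f` is constant, `g` is differentiable with everywhere-injective derivative,
and `f` is differentiable, then `f` is constant. -/
lemma const_of_comp_const {E F G : Type*}
    [NormedAddCommGroup E] [NormedSpace ℝ E]
    [NormedAddCommGroup F] [NormedSpace ℝ F]
    [NormedAddCommGroup G] [NormedSpace ℝ G]
    (g : F → G) (f : E → F) (c : G)
    (hg : Differentiable ℝ g) (hginj : ∀ y, Function.Injective (fderiv ℝ g y))
    (hf : Differentiable ℝ f) (hconst : ∀ x, g (f x) = c) :
    ∀ x y, f x = f y := by
  have hcomp : (fun x => g (f x)) = fun _ : E => c := funext hconst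
  have hzero : ∀ x, fderiv ℝ f x = 0 := by
    intro x
    have hchain : fderiv ℝ (g ∘ f) x = (fderiv ℝ g (f x)).comp (fderiv ℝ f x) :=
      fderiv_comp (x := x) (hg (f x)) (hf x)
    have hc0 : fderiv ℝ (g ∘ f) x = 0 := by
      have : (g ∘ f) = fun _ : E => c := hcomp
      rw [this, fderiv_fun_const]
      rfl
    ext v
    apply hginj (f x)
    have := congrArg (fun L => L v) (hchain.symm.trans hc0)
    simpa using this
  intro x y
  exact is_const_of_fderiv_eq_zero hf hzero x y

/-- Subspace identifiability of the long-term latent variables. -/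
theorem stmt1 (ns n1 n2 m1 m2 : ℕ)
    (gHat1 : (Fin ns → ℝ) × (Fin n1 → ℝ) → (Fin m1 → ℝ))
    (gHat2 : (Fin ns → ℝ) × (Fin n2 → ℝ) → (Fin m2 → ℝ))
    (hs : (Fin ns → ℝ) × (Fin n1 → ℝ) × (Fin n2 → ℝ) → (Fin ns → ℝ))
    (h1 : (Fin ns → ℝ) × (Fin n1 → ℝ) × (Fin n2 → ℝ) → (Fin n1 → ℝ))
    (h2 : (Fin ns → ℝ) × (Fin n1 → ℝ) × (Fin n2 → ℝ) → (Fin n2 → ℝ))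
    (g1 : (Fin ns → ℝ) × (Fin n1 → ℝ) → (Fin m1 → ℝ))
    (g2 : (Fin ns → ℝ) × (Fin n2 → ℝ) → (Fin m2 → ℝ))
    (hgHat1_diff : Differentiable ℝ gHat1)
    (hgHat2_diff : Differentiable ℝ gHat2)
    (hgHat1_inj : ∀ x, Function.Injective (fderiv ℝ gHat1 x))
    (hgHat2_inj : ∀ x, Function.Injective (fderiv ℝ gHat2 x))
    (hh_diff : Differentiable ℝ (fun x => (hs x, h1 x, h2 x)))
    (heq1 : ∀ (u : Fin ns → ℝ) (v : Fin n1 → ℝ) (w : Fin n2 → ℝ),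
      gHat1 (hs (u, v, w), h1 (u, v, w)) = g1 (u, v))
    (heq2 : ∀ (u : Fin ns → ℝ) (v : Fin n1 → ℝ) (w : Fin n2 → ℝ),
      gHat2 (hs (u, v, w), h2 (u, v, w)) = g2 (u, w)) :
    ∀ (u : Fin ns → ℝ) (v v' : Fin n1 → ℝ) (w w' : Fin n2 → ℝ),
      hs (u, v, w) = hs (u, v', w') := by
  have hs_diff : Differentiable ℝ hs := hh_diff.fst
  have h1_diff : Differentiable ℝ h1 := hh_diff.snd.fst
  have h2_diff : Differentiable ℝ h2 := hh_diff.snd.snd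
  -- hs is constant in w (for fixed u, v)
  have hw : ∀ (u : Fin ns → ℝ) (v : Fin n1 → ℝ) (w w' : Fin n2 → ℝ),
      hs (u, v, w) = hs (u, v, w') := by
    intro u v w w'
    have hemb : Differentiable ℝ (fun w : Fin n2 → ℝ => ((u, v, w) :
        (Fin ns → ℝ) × (Fin n1 → ℝ) × (Fin n2 → ℝ))) :=
      (differentiable_const u).prodMk ((differentiable_const v).prodMk differentiable_id)
    have hfd : Differentiable ℝ (fun w : Fin n2 → ℝ => (hs (u, v, w), h1 (u, v, w))) :=
      (hs_diff.comp hemb).prodMk (h1_diff.comp hemb)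
    have key := const_of_comp_const gHat1
      (fun w : Fin n2 → ℝ => (hs (u, v, w), h1 (u, v, w))) (g1 (u, v))
      hgHat1_diff hgHat1_inj hfd (fun w => heq1 u v w) w w'
    exact congrArg Prod.fst key
  -- hs is constant in v (for fixed u, w)
  have hv : ∀ (u : Fin ns → ℝ) (v v' : Fin n1 → ℝ) (w : Fin n2 → ℝ),
      hs (u, v, w) = hs (u, v', w) := by
    intro u v v' w
    have hemb : Differentiable ℝ (fun v : Fin n1 → ℝ => ((u, v, w) :
        (Fin ns → ℝ) × (Fin n1 → ℝ) × (Fin n2 → ℝ))) :=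
      (differentiable_const u).prodMk (differentiable_id.prodMk (differentiable_const w))
    have hfd : Differentiable ℝ (fun v : Fin n1 → ℝ => (hs (u, v, w), h2 (u, v, w))) :=
      (hs_diff.comp hemb).prodMk (h2_diff.comp hemb)
    have key := const_of_comp_const gHat2
      (fun v : Fin n1 → ℝ => (hs (u, v, w), h2 (u, v, w))) (g2 (u, w))
      hgHat2_diff hgHat2_inj hfd (fun v => heq2 u v w) v v'
    exact congrArg Prod.fst key
  intro u v v' w w'
  calc hs (u, v, w) = hs (u, v', w) := hv u v v' w
    _ = hs (u, v', w') := hw u v' w w'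
end

section
/- Let n_s, n_d be natural numbers and set n = n_s + n_d. For each k ∈ {1,…,n}, let q_k : ℝ × ℝ^{n_d} → ℝ be twice continuously differentiable, and let h : ℝ^n → ℝ^n be twice continuously differentiable with det(Dh(ẑ)) ≠ 0 for every ẑ. Define L̂ : ℝ^n × ℝ^{n_d} → ℝ by L̂(ẑ, u) = Σ_{k=1}^{n} q_k((h(ẑ))_k, u) + log |det(Dh(ẑ))|. Assume: (i) for every i ∈ {1,…,n_s}, l ∈ {1,…,n_d} and every (ẑ,u), the mixed second partial derivative ∂²L̂/∂u_l ∂ẑ_i (ẑ,u) = 0; (ii) for every k ∈ {1,…,n_s}, l ∈ {1,…,n_d} and every (z,u) ∈ ℝ × ℝ^{n_d}, the mixed second partial derivative ∂²q_k/∂u_l ∂z (z,u) = 0; (iii) for every (ẑ,u), the n_d vectors v_1,…,v_{n_d} ∈ ℝ^{n_d} defined by (v_l)_j = ∂²q_{n_s+j}/∂u_l ∂z evaluated at ((h(ẑ))_{n_s+j}, u), for l ∈ {1,…,n_d}, are linearly independent. Then for every i ∈ {1,…,n_s}, every j ∈ {1,…,n_d} and every ẑ ∈ ℝ^n, the partial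 derivative ∂(h(ẑ))_{n_s+j}/∂ẑ_i = 0. -/
lemma aux_det_diff (n : ℕ) :
    Differentiable ℝ (fun A : Fin n → Fin n → ℝ => (Matrix.of A).det) := by
  have e : (fun A : Fin n → Fin n → ℝ => (Matrix.of A).det)
      = fun A => ∑ σ : Equiv.Perm (Fin n),
          ((Equiv.Perm.sign σ : ℤ) : ℝ) * ∏ i, A (σ i) i := by
    funext A; rw [Matrix.det_apply']; rfl
  rw [e]
  apply Differentiable.fun_sum
  intro σ _
  apply Differentiable.const_mul
  have : (fun A : Fin n → Fin n → ℝ => ∏ i, A (σ i) i)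
      = (∏ i : Fin n, (fun A : Fin n → Fin n → ℝ => A (σ i) i) ·) := by
    funext A; simp
  rw [this]
  intro A
  classical
  exact (HasFDerivAt.finset_prod (fun i _ =>
    ((by fun_prop : Differentiable ℝ (fun A : Fin n → Fin n → ℝ => A (σ i) i)) A
      |>.hasFDerivAt))).differentiableAt

lemma aux_G_diff (n : ℕ) (h : (Fin n → ℝ) → (Fin n → ℝ)) (hh : ContDiff ℝ 2 h)
    (hd : ∀ z, (fderiv ℝ h z).det ≠ 0) :
    Differentiable ℝ (fun z => Real.log |(fderiv ℝ h z).det|) := by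
  have e1 : ∀ z, (fderiv ℝ h z).det =
      (Matrix.of (fun a b => fderiv ℝ h z (Pi.single b 1) a)).det := by
    intro z
    show LinearMap.det ((fderiv ℝ h z) : (Fin n → ℝ) →ₗ[ℝ] (Fin n → ℝ)) = _
    rw [← LinearMap.det_toMatrix (Pi.basisFun ℝ (Fin n))]
    congr 1
  have efun : (fun z => Real.log |(fderiv ℝ h z).det|)
      = fun z => Real.log ((Matrix.of (fun a b => fderiv ℝ h z (Pi.single b 1) a)).det) := by
    funext z; rw [Real.log_abs, e1 z]
  rw [efun]
  have hf : Differentiable ℝ (fun z => fderiv ℝ h z) :=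
    (hh.fderiv_right (m := 1) (by norm_num)).differentiable one_ne_zero
  have hm : Differentiable ℝ
      (fun z : Fin n → ℝ => fun a b => fderiv ℝ h z (Pi.single b 1) a) := by
    apply differentiable_pi.mpr; intro a
    apply differentiable_pi.mpr; intro b
    exact (differentiable_apply a).comp (hf.clm_apply (differentiable_const _))
  have hdet : Differentiable ℝ
      (fun z : Fin n → ℝ => (Matrix.of (fun a b => fderiv ℝ h z (Pi.single b 1) a)).det) :=
    (aux_det_diff n).comp hm
  intro z
  exact (hdet z).log (by rw [← e1 z]; exact hd z)


/-- vanishing of the block `∂z^d/∂ẑ^s` of the Jacobian of `h`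
(second half of the proof of Theorem 1 of the LSTD paper). -/
theorem stmt4 (ns nd : ℕ)
    (q : Fin (ns + nd) → ℝ × (Fin nd → ℝ) → ℝ)
    (h : (Fin (ns + nd) → ℝ) → (Fin (ns + nd) → ℝ))
    (hq_smooth : ∀ k, ContDiff ℝ 2 (q k))
    (hh_smooth : ContDiff ℝ 2 h)
    (hh_det : ∀ zHat : Fin (ns + nd) → ℝ, (fderiv ℝ h zHat).det ≠ 0)
    -- (i): the mixed second partials ∂²L̂/∂u_l ∂ẑ_i vanish for i in the long-term block,
    -- where L̂ (ẑ, u) = ∑ k, q k ((h ẑ) k, u) + log |det (Dh ẑ)|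
    (hi : ∀ (i : Fin ns) (l : Fin nd) (zHat : Fin (ns + nd) → ℝ) (u : Fin nd → ℝ),
      fderiv ℝ (fun u' : Fin nd → ℝ =>
          fderiv ℝ (fun z : Fin (ns + nd) → ℝ =>
              (∑ k : Fin (ns + nd), q k (h z k, u')) + Real.log |(fderiv ℝ h z).det|)
            zHat (Pi.single (Fin.castAdd nd i) 1))
        u (Pi.single l 1) = 0)
    -- (ii): the mixed second partials ∂²q_k/∂u_l ∂z vanish for k in the long-term block
    (hii : ∀ (k : Fin ns) (l : Fin nd) (z : ℝ) (u : Fin nd → ℝ),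
      fderiv ℝ (fun u' : Fin nd → ℝ =>
          deriv (fun z' : ℝ => q (Fin.castAdd nd k) (z', u')) z)
        u (Pi.single l 1) = 0)
    -- (iii): linear independence of the vectors of second cross-partials (assumption A3)
    (hiii : ∀ (zHat : Fin (ns + nd) → ℝ) (u : Fin nd → ℝ),
      LinearIndependent ℝ (fun l : Fin nd => fun j : Fin nd =>
        fderiv ℝ (fun u' : Fin nd → ℝ =>
            deriv (fun z' : ℝ => q (Fin.natAdd ns j) (z', u')) (h zHat (Fin.natAdd ns j)))
          u (Pi.single l 1))) :
    ∀ (i : Fin ns) (j : Fin nd) (zHat : Fin (ns + nd) → ℝ),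
      fderiv ℝ (fun z : Fin (ns + nd) → ℝ => h z (Fin.natAdd ns j))
        zHat (Pi.single (Fin.castAdd nd i) 1) = 0 := by
  intro i j zHat
  classical
  have hhd : Differentiable ℝ h := hh_smooth.differentiable (by norm_num)
  have hqd : ∀ k, Differentiable ℝ (q k) := fun k =>
    (hq_smooth k).differentiable (by norm_num)
  set e : Fin (ns + nd) → ℝ := Pi.single (Fin.castAdd nd i) 1 with he
  set u : Fin nd → ℝ := 0 with hu
  -- coordinate functions of h
  have hcoord : ∀ (k : Fin (ns + nd)) (z : Fin (ns + nd) → ℝ),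
      HasFDerivAt (fun z' => h z' k)
        ((ContinuousLinearMap.proj k).comp (fderiv ℝ h z)) z := fun k z =>
    (ContinuousLinearMap.proj (R := ℝ) (φ := fun _ : Fin (ns + nd) => ℝ) k).hasFDerivAt.comp z
      (hhd z).hasFDerivAt
  set c : Fin (ns + nd) → ℝ := fun k => fderiv ℝ h zHat e k with hcdef
  set g : Fin (ns + nd) → ℝ × (Fin nd → ℝ) → ℝ := fun k p => fderiv ℝ (q k) p (1, 0)
    with hgdef
  -- g equals the partial derivative in the first variable
  have hgderiv : ∀ (k : Fin (ns + nd)) (y₀ : ℝ) (u' : Fin nd → ℝ),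
      deriv (fun z' : ℝ => q k (z', u')) y₀ = g k (y₀, u') := by
    intro k y₀ u'
    have hin : HasDerivAt (fun z' : ℝ => (z', u')) ((1 : ℝ), (0 : Fin nd → ℝ)) y₀ :=
      (hasDerivAt_id y₀).prodMk (hasDerivAt_const y₀ u')
    exact ((hqd k (y₀, u')).hasFDerivAt.comp_hasDerivAt y₀ hin).deriv
  -- differentiability of g in the second variable
  have hgdiff : ∀ (k : Fin (ns + nd)) (y₀ : ℝ),
      Differentiable ℝ (fun u' : Fin nd → ℝ => g k (y₀, u')) := by
    intro k y₀
    have h1 : ContDiff ℝ 1 (fun p => fderiv ℝ (q k) p) :=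
      (hq_smooth k).fderiv_right (by norm_num)
    have h2 : Differentiable ℝ (fun p : ℝ × (Fin nd → ℝ) => fderiv ℝ (q k) p (1, 0)) :=
      (h1.clm_apply contDiff_const).differentiable one_ne_zero
    exact h2.comp ((differentiable_const y₀).prodMk differentiable_id)
  -- the derivative of each composed summand
  have hterm : ∀ (k : Fin (ns + nd)) (u' : Fin nd → ℝ),
      HasFDerivAt (fun z => q k (h z k, u'))
        ((fderiv ℝ (q k) (h zHat k, u')).comp
          (((ContinuousLinearMap.proj k).comp (fderiv ℝ h zHat)).prod 0)) zHat := by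
    intro k u'
    have hin : HasFDerivAt (fun z : Fin (ns + nd) → ℝ => (h z k, u'))
        ((((ContinuousLinearMap.proj k).comp (fderiv ℝ h zHat)).prod 0)) zHat :=
      (hcoord k zHat).prodMk (hasFDerivAt_const u' zHat)
    have h1 := ((hqd k (h zHat k, u')).hasFDerivAt).comp zHat hin
    simpa only [Function.comp_def] using h1
  have htermval : ∀ (k : Fin (ns + nd)) (u' : Fin nd → ℝ),
      ((fderiv ℝ (q k) (h zHat k, u')).comp
          (((ContinuousLinearMap.proj k).comp (fderiv ℝ h zHat)).prod 0)) e
        = c k * g k (h zHat k, u') := by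
    intro k u'
    have h2 : ((((ContinuousLinearMap.proj k).comp (fderiv ℝ h zHat)).prod
        (0 : (Fin (ns + nd) → ℝ) →L[ℝ] (Fin nd → ℝ))) e)
        = c k • ((1 : ℝ), (0 : Fin nd → ℝ)) := by
      simp [Prod.smul_def, hcdef]
    rw [ContinuousLinearMap.comp_apply, h2, map_smul, smul_eq_mul]
  -- derivative of the sum part
  have hF : ∀ u' : Fin nd → ℝ,
      HasFDerivAt (fun z => ∑ k : Fin (ns + nd), q k (h z k, u'))
        (∑ k : Fin (ns + nd), (fderiv ℝ (q k) (h zHat k, u')).comp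
          (((ContinuousLinearMap.proj k).comp (fderiv ℝ h zHat)).prod 0)) zHat := by
    intro u'
    exact HasFDerivAt.fun_sum (fun k _ => hterm k u')
  have hFval : ∀ u' : Fin nd → ℝ,
      fderiv ℝ (fun z => ∑ k : Fin (ns + nd), q k (h z k, u')) zHat e
        = ∑ k : Fin (ns + nd), c k * g k (h zHat k, u') := by
    intro u'
    rw [(hF u').fderiv, ContinuousLinearMap.sum_apply]
    exact Finset.sum_congr rfl (fun k _ => htermval k u')
  -- split off the log-det part
  have hGdiff := aux_G_diff (ns + nd) h hh_smooth hh_det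
  have hsplit : (fun u' : Fin nd → ℝ =>
      fderiv ℝ (fun z : Fin (ns + nd) → ℝ =>
          (∑ k : Fin (ns + nd), q k (h z k, u')) + Real.log |(fderiv ℝ h z).det|)
        zHat e)
      = fun u' => (∑ k : Fin (ns + nd), c k * g k (h zHat k, u'))
          + fderiv ℝ (fun z => Real.log |(fderiv ℝ h z).det|) zHat e := by
    funext u'
    rw [fderiv_fun_add ((hF u').differentiableAt) (hGdiff zHat),
      ContinuousLinearMap.add_apply, hFval u']
  -- hypothesis (i) in terms of g
  have key : ∀ l : Fin nd,
      fderiv ℝ (fun u' : Fin nd → ℝ => ∑ k : Fin (ns + nd), c k * g k (h zHat k, u'))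
        u (Pi.single l 1) = 0 := by
    intro l
    have H := hi i l zHat u
    rw [hsplit, fderiv_add_const] at H
    exact H
  -- differentiate the sum under the fderiv
  have hsumval : ∀ l : Fin nd,
      fderiv ℝ (fun u' : Fin nd → ℝ => ∑ k : Fin (ns + nd), c k * g k (h zHat k, u'))
        u (Pi.single l 1)
      = ∑ k : Fin (ns + nd),
          c k * fderiv ℝ (fun u' => g k (h zHat k, u')) u (Pi.single l 1) := by
    intro l
    have hs : HasFDerivAt (fun u' : Fin nd → ℝ => ∑ k : Fin (ns + nd), c k * g k (h zHat k, u'))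
        (∑ k : Fin (ns + nd), c k • fderiv ℝ (fun u' => g k (h zHat k, u')) u) u :=
      HasFDerivAt.fun_sum (fun k _ => ((hgdiff k (h zHat k) u).hasFDerivAt).const_mul (c k))
    rw [hs.fderiv, ContinuousLinearMap.sum_apply]
    exact Finset.sum_congr rfl (fun k _ => by
      rw [ContinuousLinearMap.smul_apply, smul_eq_mul])
  -- rewrite back to deriv form and kill the short-term block
  have hgfun : ∀ k : Fin (ns + nd), (fun u' : Fin nd → ℝ => g k (h zHat k, u'))
      = fun u' => deriv (fun z' : ℝ => q k (z', u')) (h zHat k) := by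
    intro k; funext u'; exact (hgderiv k (h zHat k) u').symm
  set v : Fin nd → Fin nd → ℝ := fun l jj =>
    fderiv ℝ (fun u' : Fin nd → ℝ =>
        deriv (fun z' : ℝ => q (Fin.natAdd ns jj) (z', u')) (h zHat (Fin.natAdd ns jj)))
      u (Pi.single l 1) with hvdef
  have hzero : ∀ l : Fin nd, ∑ jj : Fin nd, c (Fin.natAdd ns jj) * v l jj = 0 := by
    intro l
    have H := (hsumval l).symm.trans (key l)
    rw [Fin.sum_univ_add] at H
    have h1 : ∀ kk : Fin ns,
        c (Fin.castAdd nd kk) * fderiv ℝ (fun u' => g (Fin.castAdd nd kk) (h zHat (Fin.castAdd nd kk), u'))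
          u (Pi.single l 1) = 0 := by
      intro kk
      rw [hgfun (Fin.castAdd nd kk), hii kk l (h zHat (Fin.castAdd nd kk)) u, mul_zero]
    rw [Finset.sum_eq_zero (fun kk _ => h1 kk), zero_add] at H
    rw [← H]
    exact Finset.sum_congr rfl (fun jj _ => by rw [hgfun (Fin.natAdd ns jj)])
  -- linear algebra: v spans, so c vanishes on the long-term block
  have hLI := hiii zHat u
  have hspan : Submodule.span ℝ (Set.range v) = ⊤ := by
    have : Nonempty (Fin nd) := ⟨j⟩
    exact hLI.span_eq_top_of_card_eq_finrank (by simp [Module.finrank_fin_fun])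
  have hmem : (fun jj => c (Fin.natAdd ns jj)) ∈ Submodule.span ℝ (Set.range v) := by
    rw [hspan]; exact Submodule.mem_top
  obtain ⟨a, ha⟩ := (Submodule.mem_span_range_iff_exists_fun ℝ).mp hmem
  have hsq : ∑ jj : Fin nd, c (Fin.natAdd ns jj) * c (Fin.natAdd ns jj) = 0 := by
    have h1 : ∀ jj : Fin nd, c (Fin.natAdd ns jj) = ∑ l : Fin nd, a l * v l jj := by
      intro jj
      have h2 := congrFun ha jj
      simpa [Finset.sum_apply, smul_eq_mul] using h2.symm
    calc ∑ jj : Fin nd, c (Fin.natAdd ns jj) * c (Fin.natAdd ns jj)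
        = ∑ jj : Fin nd, (∑ l : Fin nd, a l * v l jj) * c (Fin.natAdd ns jj) :=
          Finset.sum_congr rfl (fun jj _ => by rw [← h1 jj])
      _ = ∑ jj : Fin nd, ∑ l : Fin nd, a l * (c (Fin.natAdd ns jj) * v l jj) := by
          refine Finset.sum_congr rfl (fun jj _ => ?_)
          rw [Finset.sum_mul]
          exact Finset.sum_congr rfl (fun l _ => by ring)
      _ = ∑ l : Fin nd, a l * ∑ jj : Fin nd, c (Fin.natAdd ns jj) * v l jj := by
          rw [Finset.sum_comm]
          exact Finset.sum_congr rfl (fun l _ => by rw [Finset.mul_sum])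
      _ = 0 := by
          refine Finset.sum_eq_zero (fun l _ => ?_)
          rw [hzero l, mul_zero]
  have hcj : c (Fin.natAdd ns j) * c (Fin.natAdd ns j) = 0 :=
    (Finset.sum_eq_zero_iff_of_nonneg (fun jj _ => mul_self_nonneg _)).mp hsq j
      (Finset.mem_univ j)
  have hcj0 : c (Fin.natAdd ns j) = 0 := mul_self_eq_zero.mp hcj
  have hconc : fderiv ℝ (fun z : Fin (ns + nd) → ℝ => h z (Fin.natAdd ns j)) zHat e
      = c (Fin.natAdd ns j) := by
    rw [(hcoord (Fin.natAdd ns j) zHat).fderiv]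
    rfl
  rw [hconc, hcj0]
end
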